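/- Let m ≥ 1, let s̃_{k−m}, …, s̃_k and ỹ_k be vectors in ℝⁿ, let S̃_k = [s̃_{k−m}, …, s̃_{k−1}] and S̃_{k+1} = [s̃_{k+1−m}, …, s̃_k] (both in ℝ^{n×m}), and let t ∈ ℝᵐ satisfy S̃_{k+1} t = s̃_{k−m}. Then (I − s̃_k ỹ_kᵀ) S̃_k = S̃_{k+1} T(t). -/

import Mathlib

open Matrix

/-- `S̃_k = [s̃_{k-m}, …, s̃_{k-1}]`: here `s i` denotes `s̃_{k-m+i}` for `i : Fin (m+1)`,
and this matrix has columns `s 0, …, s (m-1)`. -/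
def Stil0 {n m : ℕ} (s : Fin (m + 1) → Fin n → ℝ) : Matrix (Fin n) (Fin m) ℝ :=
  Matrix.of fun i j => s j.castSucc i

/-- `S̃_{k+1} = [s̃_{k+1-m}, …, s̃_k]`: with `s i` denoting `s̃_{k-m+i}`, this matrix has
columns `s 1, …, s m`. -/
def Stil1 {n m : ℕ} (s : Fin (m + 1) → Fin n → ℝ) : Matrix (Fin n) (Fin m) ℝ :=
  Matrix.of fun i j => s j.succ i

/-- The `m × m` matrix `T(t)` (0-indexed): column `0` has entries `t i` for `i < m-1` and
`t (m-1) - ỹᵀ s̃_{k-m}` in row `m-1`; column `j ≥ 1` has a `1` in row `j-1` and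
`-ỹᵀ s̃_{k-m+j}` in row `m-1`; all other entries are `0`. -/
def Tmat {n m : ℕ} (s : Fin (m + 1) → Fin n → ℝ) (y : Fin n → ℝ) (t : Fin m → ℝ) :
    Matrix (Fin m) (Fin m) ℝ :=
  Matrix.of fun i j =>
    if (j : ℕ) = 0 then
      (if (i : ℕ) = m - 1 then t i - y ⬝ᵥ s 0 else t i)
    else if (i : ℕ) + 1 = (j : ℕ) then 1
    else if (i : ℕ) = m - 1 then -(y ⬝ᵥ s j.castSucc)
    else 0

/-- If `S̃_{k+1} t = s̃_{k-m}`, then `(I - s̃_k ỹ_kᵀ) S̃_k = S̃_{k+1} T(t)`. -/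
theorem stmt_7 (n m : ℕ) (hm : 1 ≤ m) (s : Fin (m + 1) → Fin n → ℝ) (y : Fin n → ℝ)
    (t : Fin m → ℝ) (ht : (Stil1 s).mulVec t = s 0) :
    (1 - Matrix.vecMulVec (s (Fin.last m)) y) * Stil0 s = Stil1 s * Tmat s y t := by
  have hlast : (⟨m - 1, by omega⟩ : Fin m).succ = Fin.last m := by
    ext; simp; omega
  ext i j
  rw [Matrix.sub_mul, Matrix.one_mul, Matrix.sub_apply, Matrix.mul_apply, Matrix.mul_apply]
  simp only [Matrix.vecMulVec_apply, Stil0, Stil1, Tmat, Matrix.of_apply]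
  rcases Nat.eq_zero_or_pos j.val with hj | hj
  · -- column 0
    have hj0 : j = ⟨0, hm⟩ := by ext; exact hj
    subst hj0
    simp only [ite_true]
    have key : ∀ l : Fin m,
        s l.succ i * (if (l : ℕ) = m - 1 then t l - y ⬝ᵥ s 0 else t l)
          = s l.succ i * t l
            - (if l = (⟨m - 1, by omega⟩ : Fin m) then s l.succ i * (y ⬝ᵥ s 0) else 0) := by
      intro l
      by_cases h : (l : ℕ) = m - 1
      · have : l = (⟨m - 1, by omega⟩ : Fin m) := by ext; exact h
        simp [h, this]; ring
      · have : l ≠ (⟨m - 1, by omega⟩ : Fin m) := by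
          intro hc; exact h (congrArg Fin.val hc)
        simp [h, this]
    rw [Finset.sum_congr rfl fun l _ => key l, Finset.sum_sub_distrib,
      Finset.sum_ite_eq' Finset.univ (⟨m - 1, by omega⟩ : Fin m)]
    have ht' := congrFun ht i
    simp only [Matrix.mulVec, dotProduct, Stil1, Matrix.of_apply] at ht'
    simp [ht', hlast, dotProduct, Finset.mul_sum, mul_assoc]
  · -- columns j ≥ 1
    have hjne : (j : ℕ) ≠ 0 := Nat.pos_iff_ne_zero.mp hj
    simp only [hjne, ite_false]
    have hpred : (j : ℕ) - 1 < m := by omega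
    set p : Fin m := ⟨(j : ℕ) - 1, hpred⟩ with hp
    have hpne : p ≠ (⟨m - 1, by omega⟩ : Fin m) := by
      intro hc
      have := congrArg Fin.val hc
      simp [hp] at this
      omega
    have key : ∀ l : Fin m,
        s l.succ i * (if (l : ℕ) + 1 = (j : ℕ) then 1
            else if (l : ℕ) = m - 1 then -(y ⬝ᵥ s j.castSucc) else 0)
          = (if l = p then s l.succ i else 0)
            + (if l = (⟨m - 1, by omega⟩ : Fin m) then
                s l.succ i * -(y ⬝ᵥ s j.castSucc) else 0) := by
      intro l
      by_cases h1 : (l : ℕ) + 1 = (j : ℕ)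
      · have hlp : l = p := by ext; simp [hp]; omega
        have hlm : l ≠ (⟨m - 1, by omega⟩ : Fin m) := hlp ▸ hpne
        have h1' : (j : ℕ) - 1 + 1 = (j : ℕ) := by omega
        simp [h1, hlp, hlm, h1', hpne, (hlp ▸ h1 : (p : ℕ) + 1 = (j : ℕ))]
      · have hlp : l ≠ p := by
          intro hc
          have := congrArg Fin.val hc
          simp [hp] at this
          omega
        by_cases h2 : (l : ℕ) = m - 1
        · have : l = (⟨m - 1, by omega⟩ : Fin m) := by ext; exact h2
          have hne : ¬(m - 1 + 1 = (j : ℕ)) := by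
            rw [this] at h1
            simpa using h1
          simp [h1, h2, hlp, this, hne, (this ▸ hlp : _ ≠ p)]
        · have : l ≠ (⟨m - 1, by omega⟩ : Fin m) := by
            intro hc; exact h2 (congrArg Fin.val hc)
          simp [h1, h2, hlp, this]
    rw [Finset.sum_congr rfl fun l _ => key l, Finset.sum_add_distrib,
      Finset.sum_ite_eq' Finset.univ p, Finset.sum_ite_eq' Finset.univ
        (⟨m - 1, by omega⟩ : Fin m)]
    have hps : p.succ = j.castSucc := by ext; simp [hp]; omega
    simp [hps, hlast, dotProduct, Finset.mul_sum, mul_assoc, sub_eq_add_neg]
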